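/- For every n ≥ 1 and every threshold k with 1 ≤ k ≤ k_n, where k_n = ∏_{i=1}^n p_i (the product of the first n primes), Player 1 wins the finite-time pushdown game (G_n, col_n, k) of the lower-bound family defined in the context. (Together with the fact that Player 0 wins the infinite game (G_n, col_n) and that k_n ≥ 2^n is exponential in the cubic root of |Q_n|, this gives a lower bound on thresholds for which the finite-time pushdown game is equivalent to the pushdown parity game.) -/

import Mathlib

namespace FDGames


/-- Score of color `c` read over the reversed word (head = last letter). -/
def scAux {V : Type*} (col : V → ℕ) (c : ℕ) : List V → ℕ
  | [] => 0
  | v :: w =>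
    if c < col v then scAux col c w
    else if col v = c then scAux col c w + 1
    else 0

/-- `Sc col c w` : the scoring function `Sc_c` of McNaughton, for the word `w`. -/
def Sc {V : Type*} (col : V → ℕ) (c : ℕ) (w : List V) : ℕ :=
  scAux col c w.reverse

/-- `MaxSc col c w` : maximum of `Sc_c` over all prefixes of `w`. -/
def MaxSc {V : Type*} (col : V → ℕ) (c : ℕ) (w : List V) : ℕ :=
  (Finset.range (w.length + 1)).sup fun m => Sc col c (w.take m)

/-- A game graph: ownership partition, edge relation, initial vertex, and
every vertex has at least one successor. -/
structure GameGraph (V : Type*) where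
  own : V → Fin 2
  E : V → V → Prop
  vin : V
  succ : ∀ v, ∃ v', E v v'

/-- An infinite play: starts at the initial vertex and follows edges. -/
def IsPlay {V : Type*} (G : GameGraph V) (ρ : ℕ → V) : Prop :=
  ρ 0 = G.vin ∧ ∀ m, G.E (ρ m) (ρ (m + 1))

/-- A play consistent with the strategy `σ` of Player `i`; the strategy gets the
history (the vertices strictly before the current one) and the current vertex. -/
def ConsistentPlay {V : Type*} (G : GameGraph V) (i : Fin 2)
    (σ : List V → V → V) (ρ : ℕ → V) : Prop :=
  IsPlay G ρ ∧ ∀ m, G.own (ρ m) = i → ρ (m + 1) = σ ((List.range m).map ρ) (ρ m)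

/-- The minimal color seen infinitely often along `ρ`. -/
noncomputable def minInfCol {V : Type*} (col : V → ℕ) (ρ : ℕ → V) : ℕ :=
  sInf {c | ∀ N, ∃ m, N ≤ m ∧ col (ρ m) = c}

/-- The play `ρ` is winning for Player `i` in the (min-) parity game. -/
def WinningPlay {V : Type*} (col : V → ℕ) (i : Fin 2) (ρ : ℕ → V) : Prop :=
  minInfCol col ρ % 2 = (i : ℕ)

/-- A (legal) strategy always moves along edges. -/
def IsStrategy {V : Type*} (G : GameGraph V) (σ : List V → V → V) : Prop :=
  ∀ h v, G.E v (σ h v)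

/-- A positional strategy only depends on the current vertex. -/
def Positional {V : Type*} (σ : List V → V → V) : Prop :=
  ∀ h h' v, σ h v = σ h' v

/-- A winning strategy for Player `i` in the parity game `(G, col)`. -/
def WinningStrategy {V : Type*} (G : GameGraph V) (col : V → ℕ) (i : Fin 2)
    (σ : List V → V → V) : Prop :=
  IsStrategy G σ ∧ ∀ ρ, ConsistentPlay G i σ ρ → WinningPlay col i ρ

/-- Player `i` wins the parity game `(G, col)`. -/
def WinsGame {V : Type*} (G : GameGraph V) (col : V → ℕ) (i : Fin 2) : Prop :=
  ∃ σ, WinningStrategy G col i σ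

/-- A finite play prefix `w` is consistent with the strategy `σ` of Player `i`. -/
def FinConsistent {V : Type*} (G : GameGraph V) (i : Fin 2)
    (σ : List V → V → V) (w : List V) : Prop :=
  ∀ m, m + 1 < w.length → G.own (w.getD m G.vin) = i →
    w.getD (m + 1) G.vin = σ (w.take m) (w.getD m G.vin)

/-- A finite path from the initial vertex. -/
def FinPath {V : Type*} (G : GameGraph V) (w : List V) : Prop :=
  w.head? = some G.vin ∧ w.Chain' G.E

/-- A play of the finite-time parity game `(G, col, k)` (with colors in `[n]`):
a finite path from the initial vertex along which some score reaches the
threshold `k` exactly at the last vertex. -/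
def FTPlay {V : Type*} (G : GameGraph V) (col : V → ℕ) (n k : ℕ) (w : List V) : Prop :=
  FinPath G w ∧ (∃ c < n, MaxSc col c w = k) ∧ ∀ c < n, MaxSc col c w.dropLast < k

/-- The finished finite-time play `w` is winning for Player `i`. -/
def FTWinningPlay {V : Type*} (col : V → ℕ) (n k : ℕ) (i : Fin 2) (w : List V) : Prop :=
  ∃ c < n, MaxSc col c w = k ∧ c % 2 = (i : ℕ)

/-- Player `i` wins the finite-time parity game `(G, col, k)`. -/
def FTWins {V : Type*} (G : GameGraph V) (col : V → ℕ) (n k : ℕ) (i : Fin 2) : Prop :=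
  ∃ σ, IsStrategy G σ ∧
    ∀ w, FTPlay G col n k w → FinConsistent G i σ w → FTWinningPlay col n k i w

/-- A pushdown system.  The bottom-of-stack symbol `⊥` is kept implicit: a stack
content is the list of symbols from `Γ` strictly above `⊥` (top = head), and the
top-of-stack symbol read by a transition is an `Option Γ` (`none` = `⊥`).  Since
`⊥` can neither be written nor deleted, a transition reading a symbol of `Γ`
rewrites it to at most two symbols of `Γ`, and a transition reading `⊥` writes at
most one symbol of `Γ` above `⊥`.  The system is deadlock-free. -/
structure PDS (Q Γ : Type*) where
  qin : Q
  Δ : Set (Q × Option Γ × Q × List Γ)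
  bound2 : ∀ q A p α, (q, A, p, α) ∈ Δ → α.length ≤ 2
  bound1 : ∀ q p α, (q, (none : Option Γ), p, α) ∈ Δ → α.length ≤ 1
  df : ∀ q A, ∃ q' α, (q, A, q', α) ∈ Δ

/-- Configurations: a state together with the stack content above `⊥`. -/
abbrev Config (Q Γ : Type*) := Q × List Γ

/-- The stack height of a configuration. -/
def confSh {Q Γ : Type*} (v : Config Q Γ) : ℕ := v.2.length

/-- One step of the pushdown system between configurations. -/
def PDS.step {Q Γ : Type*} (P : PDS Q Γ) (u v : Config Q Γ) : Prop :=
  (u.2 = [] ∧ (u.1, (none : Option Γ), v.1, v.2) ∈ P.Δ) ∨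
  (∃ a rest α, u.2 = a :: rest ∧ (u.1, some a, v.1, α) ∈ P.Δ ∧ v.2 = α ++ rest)

/-- The pushdown game graph induced by a PDS and a partition of its states. -/
def PDS.graph {Q Γ : Type*} (P : PDS Q Γ) (own : Q → Fin 2) :
    GameGraph (Config Q Γ) where
  own := fun v => own v.1
  E := P.step
  vin := (P.qin, [])
  succ := by
    rintro ⟨q, _ | ⟨a, rest⟩⟩
    · obtain ⟨q', α, h⟩ := P.df q none
      exact ⟨(q', α), Or.inl ⟨rfl, h⟩⟩
    · obtain ⟨q', α, h⟩ := P.df q (some a)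
      exact ⟨(q', α ++ rest), Or.inr ⟨a, rest, α, rfl, h, rfl⟩⟩

/-- The stair positions of a sequence of stack heights. -/
def stairPositions (hs : List ℕ) : Finset ℕ :=
  (Finset.range hs.length).filter fun m =>
    ∀ m' < hs.length, m ≤ m' → hs.getD m 0 ≤ hs.getD m' 0

/-- For a word of (color, stack height) pairs, the position where `lastBump`
starts, i.e. `l + 1` for the second largest stair position `l` (and `0` if there
is no such position). -/
def bumpStart (w : List (ℕ × ℕ)) : ℕ :=
  ((Finset.range (w.length - 1)).filter
    fun l => (w.getD l (0, 0)).2 ≤ ((w.getLast?).getD (0, 0)).2).sup (· + 1)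

theorem bumpStart_lt {w : List (ℕ × ℕ)} (h : w ≠ []) : bumpStart w < w.length := by
  have h1 : 0 < w.length := List.length_pos_iff.mpr h
  have h2 : bumpStart w ≤ w.length - 1 := by
    apply Finset.sup_le
    intro l hl
    have := Finset.mem_range.mp (Finset.mem_filter.mp hl).1
    omega
  omega

/-- The minimal color occurring in a word of (color, stack height) pairs. -/
def minColList (w : List (ℕ × ℕ)) : ℕ := WithTop.untopD 0 ((w.map Prod.fst).minimum)

/-- The stair-scoring function `StairSc_c`, on words of (color, stack height)
pairs.  `w.take (bumpStart w)` is `Reset(w)` and `w.drop (bumpStart w)` is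
`lastBump(w)`. -/
def StairSc (c : ℕ) (w : List (ℕ × ℕ)) : ℕ :=
  if h : w = [] then 0
  else if c < minColList (w.drop (bumpStart w)) then StairSc c (w.take (bumpStart w))
  else if minColList (w.drop (bumpStart w)) = c then StairSc c (w.take (bumpStart w)) + 1
  else 0
termination_by w.length
decreasing_by
  all_goals
    have hlt := bumpStart_lt h
    simp only [List.length_take]
    omega

/-- Maximum of `StairSc_c` over all prefixes. -/
def MaxStairSc (c : ℕ) (w : List (ℕ × ℕ)) : ℕ :=
  (Finset.range (w.length + 1)).sup fun m => StairSc c (w.take m)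

/-- The word of (color, stack height) pairs associated to a path of
configurations. -/
def toCH {Q Γ : Type*} (col : Q → ℕ) (w : List (Config Q Γ)) : List (ℕ × ℕ) :=
  w.map fun v => (col v.1, v.2.length)

/-- A play of the finite-time pushdown game `(G, col, k)` (with colors in `[n]`):
a finite path from the initial configuration along which some stair-score reaches
the threshold `k` exactly at the last configuration. -/
def FTPDPlay {Q Γ : Type*} (P : PDS Q Γ) (own : Q → Fin 2) (col : Q → ℕ)
    (n k : ℕ) (w : List (Config Q Γ)) : Prop :=
  FinPath (P.graph own) w ∧ (∃ c < n, MaxStairSc c (toCH col w) = k) ∧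
    ∀ c < n, MaxStairSc c (toCH col w.dropLast) < k

/-- The finished finite-time pushdown play `w` is winning for Player `i`. -/
def FTPDWinningPlay {Q Γ : Type*} (col : Q → ℕ) (n k : ℕ) (i : Fin 2)
    (w : List (Config Q Γ)) : Prop :=
  ∃ c < n, MaxStairSc c (toCH col w) = k ∧ c % 2 = (i : ℕ)

/-- Player `i` wins the finite-time pushdown game `(G, col, k)`. -/
def FTPDWins {Q Γ : Type*} (P : PDS Q Γ) (own : Q → Fin 2) (col : Q → ℕ)
    (n k : ℕ) (i : Fin 2) : Prop :=
  ∃ σ, IsStrategy (P.graph own) σ ∧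
    ∀ w, FTPDPlay P own col n k w → FinConsistent (P.graph own) i σ w →
      FTPDWinningPlay col n k i w

/-- The `i`-th prime number (`nthPrime 0 = 2`). -/
noncomputable def nthPrime (i : ℕ) : ℕ := Nat.nth Nat.Prime i

theorem nthPrime_pos (i : ℕ) : 0 < nthPrime i := (Nat.prime_nth_prime i).pos

/-- The states of the lower-bound pushdown system `P_n`:
`qin`, `qbox = q_□` and the counting states `cnt i j = q_{i+1}^j` with
`j < p_{i+1}`. -/
inductive QLB (n : ℕ) where
  | qin : QLB n
  | qbox : QLB n
  | cnt : (i : Fin n) → (j : Fin (nthPrime i)) → QLB n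

/-- The transition relation `Δ_n` of the lower-bound pushdown system. -/
def lbDelta (n : ℕ) : Set (QLB n × Option Unit × QLB n × List Unit) :=
  { t |
    t = (QLB.qin, some (), QLB.qin, [(), ()]) ∨
    t = (QLB.qin, none, QLB.qin, [()]) ∨
    t = (QLB.qin, some (), QLB.qbox, [(), ()]) ∨
    t = (QLB.qin, none, QLB.qbox, [()]) ∨
    (∃ i : Fin n, t = (QLB.qbox, some (), QLB.cnt i ⟨0, nthPrime_pos i⟩, [()])) ∨
    (∃ (i : Fin n) (j : Fin (nthPrime i)),
      t = (QLB.cnt i j, some (),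
           QLB.cnt i ⟨((j : ℕ) + 1) % nthPrime i, Nat.mod_lt _ (nthPrime_pos i)⟩, [])) ∨
    (∃ q : QLB n, q ≠ QLB.qin ∧ t = (q, none, q, [])) }

/-- The lower-bound pushdown system `P_n` (for `n ≥ 1`). -/
def lbPDS (n : ℕ) (hn : 1 ≤ n) : PDS (QLB n) Unit where
  qin := QLB.qin
  Δ := lbDelta n
  bound2 := by
    intro q A p α h
    simp only [lbDelta, Set.mem_setOf_eq, Prod.mk.injEq] at h
    rcases h with ⟨-,-,-,rfl⟩|⟨-,-,-,rfl⟩|⟨-,-,-,rfl⟩|⟨-,-,-,rfl⟩|⟨i,-,-,-,rfl⟩|⟨i,j,-,-,-,rfl⟩|⟨q',hq,-,-,-,rfl⟩ <;> simp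
  bound1 := by
    intro q p α h
    simp only [lbDelta, Set.mem_setOf_eq, Prod.mk.injEq, reduceCtorEq,
      false_and, and_false, false_or, exists_false, or_false] at h
    rcases h with ⟨-,-,-,rfl⟩|⟨-,-,-,rfl⟩|⟨q',hq,-,-,-,rfl⟩ <;> simp
  df := by
    intro q A
    rcases A with _ | u
    · rcases q with _ | _ | ⟨i, j⟩
      · exact ⟨QLB.qin, [()], Or.inr (Or.inl rfl)⟩
      · refine ⟨QLB.qbox, [], ?_⟩
        refine Or.inr (Or.inr (Or.inr (Or.inr (Or.inr (Or.inr ⟨QLB.qbox, ?_, rfl⟩)))))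
        exact fun h => nomatch h
      · refine ⟨QLB.cnt i j, [], ?_⟩
        refine Or.inr (Or.inr (Or.inr (Or.inr (Or.inr (Or.inr ⟨QLB.cnt i j, ?_, rfl⟩)))))
        exact fun h => nomatch h
    · rcases q with _ | _ | ⟨i, j⟩
      · exact ⟨QLB.qin, [(), ()], Or.inl rfl⟩
      · exact ⟨QLB.cnt ⟨0, hn⟩ ⟨0, nthPrime_pos _⟩, [()],
          Or.inr (Or.inr (Or.inr (Or.inr (Or.inl ⟨⟨0, hn⟩, rfl⟩))))⟩
      · exact ⟨QLB.cnt i ⟨((j : ℕ) + 1) % nthPrime i, Nat.mod_lt _ (nthPrime_pos i)⟩, [],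
          Or.inr (Or.inr (Or.inr (Or.inr (Or.inr (Or.inl ⟨i, j, rfl⟩)))))⟩

/-- The partition of the lower-bound game: Player 1 owns exactly `q_□`. -/
def lbOwn {n : ℕ} : QLB n → Fin 2
  | QLB.qbox => 1
  | _ => 0

/-- The coloring of the lower-bound game: `col (q_i^0) = 0`, all other states
have color `1`. -/
def lbCol {n : ℕ} : QLB n → ℕ
  | QLB.cnt _ j => if (j : ℕ) = 0 then 0 else 1
  | _ => 1

section WordLemmas

theorem bumpStart_concat_full (X : List (ℕ × ℕ)) (v : ℕ × ℕ) (hX : X ≠ [])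
    (H : ∀ l < X.length, (X.getD l (0,0)).2 ≤ v.2) :
    bumpStart (X ++ [v]) = X.length := by
  have hL : (X ++ [v]).length - 1 = X.length := by simp
  rw [bumpStart, hL, List.getLast?_concat, Option.getD_some]
  have hfilter : (Finset.range X.length).filter
      (fun l => ((X ++ [v]).getD l (0,0)).2 ≤ v.2) = Finset.range X.length := by
    apply Finset.filter_true_of_mem
    intro l hl
    rw [List.getD_append _ _ _ _ (Finset.mem_range.mp hl)]
    exact H l (Finset.mem_range.mp hl)
  rw [hfilter]
  have hpos : 0 < X.length := List.length_pos_iff.mpr hX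
  apply le_antisymm
  · exact Finset.sup_le fun l hl => by have := Finset.mem_range.mp hl; omega
  · have hm : X.length - 1 ∈ Finset.range X.length := Finset.mem_range.mpr (by omega)
    have h2 : X.length - 1 + 1 ≤ (Finset.range X.length).sup (· + 1) :=
      Finset.le_sup (f := (· + 1)) hm
    omega

theorem bumpStart_concat_split (X : List (ℕ × ℕ)) (v : ℕ × ℕ) (l0 : ℕ) (hl0 : l0 < X.length)
    (H1 : (X.getD l0 (0,0)).2 ≤ v.2)
    (H2 : ∀ l, l0 < l → l < X.length → v.2 < (X.getD l (0,0)).2) :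
    bumpStart (X ++ [v]) = l0 + 1 := by
  have hL : (X ++ [v]).length - 1 = X.length := by simp
  rw [bumpStart, hL, List.getLast?_concat, Option.getD_some]
  apply le_antisymm
  · apply Finset.sup_le
    intro l hl
    obtain ⟨hlr, hcond⟩ := Finset.mem_filter.mp hl
    have hlr := Finset.mem_range.mp hlr
    rw [List.getD_append _ _ _ _ hlr] at hcond
    by_contra hc
    exact absurd hcond (not_le.mpr (H2 l (by omega) hlr))
  · apply Finset.le_sup (f := (· + 1))
    refine Finset.mem_filter.mpr ⟨Finset.mem_range.mpr hl0, ?_⟩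
    rw [List.getD_append _ _ _ _ hl0]
    exact H1

theorem StairSc_concat (c : ℕ) (X : List (ℕ × ℕ)) (v : ℕ × ℕ) {B : ℕ}
    (hB : bumpStart (X ++ [v]) = B) (hle : B ≤ X.length) :
    StairSc c (X ++ [v]) =
      if c < minColList (X.drop B ++ [v]) then StairSc c (X.take B)
      else if minColList (X.drop B ++ [v]) = c then StairSc c (X.take B) + 1 else 0 := by
  have hne : X ++ [v] ≠ [] := by simp
  rw [StairSc, dif_neg hne, hB, List.drop_append_of_le_length hle,
    List.take_append_of_le_length hle]

theorem minColList_singleton (v : ℕ × ℕ) : minColList [v] = v.1 := by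
  rw [minColList, List.map_singleton, List.minimum_singleton]; rfl

theorem minColList_eq_zero {w : List (ℕ × ℕ)} (x : ℕ × ℕ) (hx : x ∈ w) (hx0 : x.1 = 0) :
    minColList w = 0 := by
  have h0 : (0 : ℕ) ∈ w.map Prod.fst := by
    rw [← hx0]; exact List.mem_map_of_mem hx
  have hle : (w.map Prod.fst).minimum ≤ (0 : ℕ) := List.minimum_le_of_mem' h0
  rcases hmin : (w.map Prod.fst).minimum with _ | m
  · rw [hmin] at hle
    simp at hle
    exact absurd hle (not_le.mpr (WithTop.coe_lt_top (0:ℕ)))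
  · rw [hmin] at hle
    have hm0 : m = 0 := Nat.le_zero.mp (WithTop.coe_le_coe.mp hle)
    rw [minColList, hmin, hm0]
    rfl

theorem StairSc_le_bump (c : ℕ) (w : List (ℕ × ℕ)) :
    StairSc c w ≤ StairSc c (w.take (bumpStart w)) + 1 := by
  rw [StairSc]
  split_ifs <;> simp

theorem take_eq_take_dropLast {α : Type*} (w : List α) (m : ℕ) (h : m + 1 ≤ w.length) :
    w.take m = w.dropLast.take m := by
  rw [List.dropLast_eq_take, List.take_take]
  congr 1
  omega

theorem le_MaxStairSc (c : ℕ) (w : List (ℕ × ℕ)) (m : ℕ) :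
    StairSc c (w.take m) ≤ MaxStairSc c w := by
  have hx : w.take m = w.take (min m w.length) := by
    rcases le_total m w.length with h | h
    · rw [min_eq_left h]
    · rw [List.take_of_length_le h, min_eq_right h, List.take_length]
  rw [hx, MaxStairSc]
  exact Finset.le_sup (f := fun m => StairSc c ((w.take m))) (Finset.mem_range.mpr (by omega))

theorem MaxStairSc_le {c K : ℕ} {w : List (ℕ × ℕ)} (h : ∀ m, StairSc c (w.take m) ≤ K) :
    MaxStairSc c w ≤ K :=
  Finset.sup_le fun m _ => h m

theorem MaxStairSc_le_dropLast_succ (c : ℕ) (w : List (ℕ × ℕ)) :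
    MaxStairSc c w ≤ MaxStairSc c w.dropLast + 1 := by
  by_cases hw : w = []
  · subst hw; simp [MaxStairSc, Sc]
  apply MaxStairSc_le
  intro m
  rcases le_or_gt (m + 1) w.length with h | h
  · rw [take_eq_take_dropLast w m h]
    exact (le_MaxStairSc _ _ _).trans (Nat.le_succ _)
  · have hwm : w.take m = w := List.take_of_length_le (by omega)
    rw [hwm]
    refine (StairSc_le_bump c w).trans ?_
    have hb : bumpStart w < w.length := bumpStart_lt hw
    rw [take_eq_take_dropLast w (bumpStart w) (by omega)]
    exact Nat.succ_le_succ (le_MaxStairSc _ _ _)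

end WordLemmas
section PrefixLemmas

theorem getD_take' {α : Type*} (w : List α) (m j : ℕ) (d : α) (h : j < m) :
    (w.take m).getD j d = w.getD j d := by
  rcases lt_or_ge j w.length with hj | hj
  · rw [List.getD_eq_getElem _ _ (by simp [List.length_take]; omega),
      List.getD_eq_getElem _ _ hj]
    simp [List.getElem_take]
  · rw [List.getD_eq_default _ _ (by simp [List.length_take]; omega),
      List.getD_eq_default _ _ (by omega)]

theorem finPath_take {V : Type*} {G : GameGraph V} {w : List V} (h : FinPath G w)
    (m : ℕ) (hm : 1 ≤ m) : FinPath G (w.take m) := by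
  obtain ⟨h1, h2⟩ := h
  constructor
  · cases w with
    | nil => simp at h1
    | cons a t =>
      cases m with
      | zero => omega
      | succ m => simpa using h1
  · exact h2.prefix (List.take_prefix m w)

theorem finConsistent_take {V : Type*} {G : GameGraph V} {i : Fin 2}
    {σ : List V → V → V} {w : List V} (h : FinConsistent G i σ w) (m : ℕ) :
    FinConsistent G i σ (w.take m) := by
  intro j hj hown
  rw [List.length_take] at hj
  have hjm : j + 1 < m := by omega
  have hjw : j + 1 < w.length := by omega
  rw [getD_take' _ _ _ _ (by omega)] at hown
  rw [getD_take' _ _ _ _ hjm, getD_take' _ _ _ _ (by omega), List.take_take,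
    min_eq_left (by omega : j ≤ m)]
  exact h j hjw hown

end PrefixLemmas

section LB

variable (n : ℕ) (hn : 1 ≤ n)

open Classical in
/-- An index `i` such that `p_i` does not divide `h`, if one exists. -/
noncomputable def goodI (h : ℕ) : Fin n :=
  if H : ∃ i : Fin n, ¬ nthPrime (i : ℕ) ∣ h then H.choose else ⟨0, hn⟩

theorem goodI_spec (h : ℕ) (h1 : 1 ≤ h) (h2 : h < ∏ i ∈ Finset.range n, nthPrime i) :
    ¬ nthPrime ((goodI n hn h : Fin n) : ℕ) ∣ h := by
  have H : ∃ i : Fin n, ¬ nthPrime (i : ℕ) ∣ h := by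
    by_contra hc
    push_neg at hc
    have hdvd : (∏ i ∈ Finset.range n, nthPrime i) ∣ h := by
      have hinj : Function.Injective (Nat.nth Nat.Prime) :=
        Nat.nth_injective Nat.infinite_setOf_prime
      have himg : ∏ p ∈ (Finset.range n).image (fun i => nthPrime i), p
          = ∏ i ∈ Finset.range n, nthPrime i :=
        Finset.prod_image fun a _ b _ hab => hinj hab
      rw [← himg]
      apply Finset.prod_primes_dvd
      · intro p hp
        obtain ⟨i, _, rfl⟩ := Finset.mem_image.mp hp
        exact (Nat.prime_nth_prime i).prime
      · intro p hp
        obtain ⟨i, hi, rfl⟩ := Finset.mem_image.mp hp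
        exact hc ⟨i, Finset.mem_range.mp hi⟩
    have := Nat.le_of_dvd (by omega) hdvd
    omega
  rw [goodI, dif_pos H]
  exact H.choose_spec

open Classical in
/-- The strategy of Player 1: at `q_□` with stack height `h`, move to the
counting state of a prime not dividing `h`. -/
noncomputable def lbSigma : List (Config (QLB n) Unit) → Config (QLB n) Unit →
    Config (QLB n) Unit :=
  fun _ v =>
    if v.1 = QLB.qbox ∧ v.2 ≠ [] then
      (QLB.cnt (goodI n hn v.2.length) ⟨0, nthPrime_pos _⟩, v.2)
    else Classical.choose (((lbPDS n hn).graph lbOwn).succ v)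

theorem lbSigma_strategy : IsStrategy ((lbPDS n hn).graph lbOwn) (lbSigma n hn) := by
  intro h v
  rw [lbSigma]
  split_ifs with hv
  · obtain ⟨hq, hs⟩ := hv
    rcases v with ⟨q, s⟩
    cases s with
    | nil => simp at hs
    | cons a rest =>
      simp only at hq
      subst hq
      cases a
      show (lbPDS n hn).step _ _
      refine Or.inr ⟨(), rest, [()], rfl, ?_, rfl⟩
      show _ ∈ lbDelta n
      simp only [lbDelta, Set.mem_setOf_eq]
      exact Or.inr (Or.inr (Or.inr (Or.inr (Or.inl ⟨_, rfl⟩))))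
  · exact Classical.choose_spec (((lbPDS n hn).graph lbOwn).succ v)

end LB
section StepInv

variable {n : ℕ} {hn : 1 ≤ n}

theorem step_qin_nil {v : Config (QLB n) Unit}
    (h : (lbPDS n hn).step (QLB.qin, ([] : List Unit)) v) :
    v = (QLB.qin, [()]) ∨ v = (QLB.qbox, [()]) := by
  obtain ⟨v1, v2⟩ := v
  rcases h with ⟨-, hΔ⟩ | ⟨a, rest, α, heq, hΔ, hv⟩
  · have hΔ' : ((QLB.qin : QLB n), (none : Option Unit), v1, v2) ∈ lbDelta n := hΔ
    simp only [lbDelta, Set.mem_setOf_eq, Prod.mk.injEq, reduceCtorEq, false_and, and_false,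
      true_and, false_or, exists_false, or_false, ne_eq] at hΔ'
    rcases hΔ' with ⟨h1, h2⟩ | ⟨h1, h2⟩ | ⟨q, hq, h1, -⟩
    · exact Or.inl (by rw [h1, h2])
    · exact Or.inr (by rw [h1, h2])
    · exact absurd h1.symm hq
  · exact absurd heq (by simp)

theorem step_qin_cons {r : List Unit} {v : Config (QLB n) Unit}
    (h : (lbPDS n hn).step (QLB.qin, () :: r) v) :
    v = (QLB.qin, () :: () :: r) ∨ v = (QLB.qbox, () :: () :: r) := by
  obtain ⟨v1, v2⟩ := v
  rcases h with ⟨heq, -⟩ | ⟨a, rest, α, heq, hΔ, hv⟩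
  · exact absurd heq (by simp)
  · obtain ⟨rfl, rfl⟩ : a = () ∧ rest = r := by
      constructor
      · rfl
      · exact ((List.cons.injEq _ _ _ _ ▸ heq).2).symm
    have hΔ' : ((QLB.qin : QLB n), (some () : Option Unit), v1, α) ∈ lbDelta n := hΔ
    simp only [lbDelta, Set.mem_setOf_eq, Prod.mk.injEq, reduceCtorEq, false_and, and_false,
      true_and, false_or, exists_false, or_false, ne_eq] at hΔ'
    simp only at hv
    rcases hΔ' with ⟨rfl, rfl⟩ | ⟨rfl, rfl⟩
    · exact Or.inl (by rw [hv]; rfl)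
    · exact Or.inr (by rw [hv]; rfl)

theorem step_cnt_cons {i : Fin n} {j : Fin (nthPrime i)} {r : List Unit}
    {v : Config (QLB n) Unit}
    (h : (lbPDS n hn).step (QLB.cnt i j, () :: r) v) :
    v = (QLB.cnt i ⟨((j : ℕ) + 1) % nthPrime i, Nat.mod_lt _ (nthPrime_pos i)⟩, r) := by
  obtain ⟨v1, v2⟩ := v
  rcases h with ⟨heq, -⟩ | ⟨a, rest, α, heq, hΔ, hv⟩
  · exact absurd heq (by simp)
  · obtain ⟨rfl, rfl⟩ : a = () ∧ rest = r := by
      constructor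
      · rfl
      · exact ((List.cons.injEq _ _ _ _ ▸ heq).2).symm
    have hΔ' : ((QLB.cnt i j : QLB n), (some () : Option Unit), v1, α) ∈ lbDelta n := hΔ
    simp only [lbDelta, Set.mem_setOf_eq, Prod.mk.injEq, reduceCtorEq, false_and, and_false,
      true_and, false_or, exists_false, or_false, ne_eq, QLB.cnt.injEq] at hΔ'
    obtain ⟨i', j', ⟨rfl, hj⟩, rfl, rfl⟩ := hΔ'
    rw [heq_iff_eq] at hj
    subst hj
    simp only at hv
    rw [hv]
    rfl

theorem step_cnt_nil {i : Fin n} {j : Fin (nthPrime i)} {v : Config (QLB n) Unit}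
    (h : (lbPDS n hn).step (QLB.cnt i j, ([] : List Unit)) v) :
    v = (QLB.cnt i j, []) := by
  obtain ⟨v1, v2⟩ := v
  rcases h with ⟨-, hΔ⟩ | ⟨a, rest, α, heq, hΔ, hv⟩
  · have hΔ' : ((QLB.cnt i j : QLB n), (none : Option Unit), v1, v2) ∈ lbDelta n := hΔ
    simp only [lbDelta, Set.mem_setOf_eq, Prod.mk.injEq, reduceCtorEq, false_and, and_false,
      true_and, false_or, exists_false, or_false, ne_eq, QLB.cnt.injEq] at hΔ'
    obtain ⟨q, -, rfl, rfl, rfl⟩ := hΔ'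
    rfl
  · exact absurd heq (by simp)

end StepInv
section Shapes

variable (n : ℕ) (hn : 1 ≤ n)

/-- The index chosen by Player 1's strategy at stack height `m+1`. -/
noncomputable def lbI (m : ℕ) : Fin n := goodI n hn ((List.replicate (m+1) ()).length)

theorem lbI_eq (m : ℕ) : lbI n hn m = goodI n hn (m+1) := by
  rw [lbI, List.length_replicate]

/-- The counting state value `j mod p_i` for `i = lbI m`. -/
noncomputable def lbJ (m j : ℕ) : Fin (nthPrime ((lbI n hn m : Fin n) : ℕ)) :=
  ⟨j % nthPrime _, Nat.mod_lt _ (nthPrime_pos _)⟩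

noncomputable def Apath (m : ℕ) : List (Config (QLB n) Unit) :=
  (List.range (m + 1)).map fun t => (QLB.qin, List.replicate t ())

noncomputable def BaseP (m : ℕ) : List (Config (QLB n) Unit) :=
  Apath n m ++ [(QLB.qbox, List.replicate (m+1) ())]

noncomputable def Base2P (m : ℕ) : List (Config (QLB n) Unit) :=
  BaseP n m ++ [(QLB.cnt (lbI n hn m) ⟨0, nthPrime_pos _⟩, List.replicate (m+1) ())]

noncomputable def PopsP (m s : ℕ) : List (Config (QLB n) Unit) :=
  Base2P n hn m ++ (List.range s).map fun t =>
    (QLB.cnt (lbI n hn m) (lbJ n hn m (t+1)), List.replicate (m - t) ())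

noncomputable def BotsP (m s : ℕ) : List (Config (QLB n) Unit) :=
  PopsP n hn m (m+1) ++
    List.replicate s (QLB.cnt (lbI n hn m) (lbJ n hn m (m+1)), ([] : List Unit))

def Shape (w : List (Config (QLB n) Unit)) : Prop :=
  (∃ m, w = Apath n m) ∨ (∃ m, w = BaseP n m) ∨ (∃ m, w = Base2P n hn m) ∨
  (∃ m s, 1 ≤ s ∧ s ≤ m + 1 ∧ w = PopsP n hn m s) ∨ (∃ m s, 1 ≤ s ∧ w = BotsP n hn m s)

theorem Apath_succ (m : ℕ) :
    Apath n (m+1) = Apath n m ++ [(QLB.qin, List.replicate (m+1) ())] := by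
  rw [Apath, Apath, List.range_succ, List.map_append]
  rfl

theorem PopsP_succ (m s : ℕ) :
    PopsP n hn m (s+1) = PopsP n hn m s ++
      [(QLB.cnt (lbI n hn m) (lbJ n hn m (s+1)), List.replicate (m - s) ())] := by
  rw [PopsP, PopsP, List.range_succ, List.map_append, List.append_assoc]
  rfl

theorem BotsP_succ (m s : ℕ) :
    BotsP n hn m (s+1) = BotsP n hn m s ++
      [(QLB.cnt (lbI n hn m) (lbJ n hn m (m+1)), ([] : List Unit))] := by
  rw [BotsP, BotsP, List.replicate_succ', ← List.append_assoc]

theorem length_Apath (m : ℕ) : (Apath n m).length = m + 1 := by simp [Apath]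

theorem getLast?_Apath (m : ℕ) :
    (Apath n m).getLast? = some (QLB.qin, List.replicate m ()) := by
  cases m with
  | zero => rfl
  | succ m => rw [Apath_succ, List.getLast?_concat]

theorem step_qin_rep {hn : 1 ≤ n} {m : ℕ} {v : Config (QLB n) Unit}
    (h : (lbPDS n hn).step (QLB.qin, List.replicate m ()) v) :
    v = (QLB.qin, List.replicate (m+1) ()) ∨ v = (QLB.qbox, List.replicate (m+1) ()) := by
  cases m with
  | zero => simpa [List.replicate_succ] using step_qin_nil h
  | succ m =>
    rw [List.replicate_succ] at h
    rcases step_qin_cons h with h | h <;> [left; right] <;>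
      simp [h, List.replicate_succ]

theorem step_cnt_rep {hn : 1 ≤ n} {i : Fin n} {j : Fin (nthPrime i)} {t : ℕ}
    {v : Config (QLB n) Unit}
    (h : (lbPDS n hn).step (QLB.cnt i j, List.replicate (t+1) ()) v) :
    v = (QLB.cnt i ⟨((j : ℕ) + 1) % nthPrime i, Nat.mod_lt _ (nthPrime_pos i)⟩,
      List.replicate t ()) := by
  rw [List.replicate_succ] at h
  exact step_cnt_cons h

end Shapes

section ShapeLemma

variable (n : ℕ) (hn : 1 ≤ n)

theorem lbJ_succ (m j : ℕ) :
    (⟨((lbJ n hn m j : ℕ) + 1) % nthPrime ((lbI n hn m : Fin n) : ℕ),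
      Nat.mod_lt _ (nthPrime_pos _)⟩ : Fin (nthPrime ((lbI n hn m : Fin n) : ℕ)))
      = lbJ n hn m (j+1) := by
  apply Fin.ext
  show (j % nthPrime ((lbI n hn m : Fin n) : ℕ) + 1) % _ = _
  rw [Nat.mod_add_mod]
  rfl

theorem shape_lemma : ∀ w : List (Config (QLB n) Unit), w ≠ [] →
    FinPath ((lbPDS n hn).graph lbOwn) w →
    FinConsistent ((lbPDS n hn).graph lbOwn) 1 (lbSigma n hn) w → Shape n hn w := by
  intro w
  induction w using List.reverseRecOn with
  | nil => exact fun h => absurd rfl h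
  | append_singleton u v ih =>
    intro _ hpath hcons
    rcases eq_or_ne u [] with rfl | hu
    · have hv : v = ((lbPDS n hn).graph lbOwn).vin := by simpa [FinPath] using hpath.1
      exact Or.inl ⟨0, by rw [hv]; rfl⟩
    · have hul : 1 ≤ u.length := List.length_pos_iff.mpr hu
      have hupath : FinPath ((lbPDS n hn).graph lbOwn) u := by
        have := finPath_take hpath u.length hul
        rwa [List.take_left] at this
      have hucons := finConsistent_take hcons u.length
      rw [List.take_left] at hucons
      have hedge : ∀ x, u.getLast? = some x → (lbPDS n hn).step x v := by
        have hch : List.IsChain ((lbPDS n hn).graph lbOwn).E (u ++ [v]) := hpath.2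
        rw [List.isChain_append] at hch
        intro x hx
        exact hch.2.2 x hx v rfl
      rcases ih hu hupath hucons with ⟨m, rfl⟩ | ⟨m, rfl⟩ | ⟨m, rfl⟩ |
        ⟨m, s, hs1, hs2, rfl⟩ | ⟨m, s, hs1, rfl⟩
      · rcases step_qin_rep n (hedge _ (getLast?_Apath n m)) with rfl | rfl
        · exact Or.inl ⟨m+1, (Apath_succ n m).symm⟩
        · exact Or.inr (Or.inl ⟨m, rfl⟩)
      · -- BaseP: use consistency of Player 1 at qbox
        have hlen : (BaseP n m).length = m + 2 := by simp [BaseP, length_Apath]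
        have hw : m + 1 + 1 < (BaseP n m ++ [v]).length := by
          simp [hlen]
        have hgd1 : (BaseP n m ++ [v]).getD (m+1) ((lbPDS n hn).graph lbOwn).vin
            = (QLB.qbox, List.replicate (m+1) ()) := by
          rw [List.getD_append _ _ _ _ (by omega), BaseP,
            List.getD_append_right _ _ _ _ (by rw [length_Apath]), length_Apath]
          simp
        have hgd2 : (BaseP n m ++ [v]).getD (m+1+1) ((lbPDS n hn).graph lbOwn).vin = v := by
          rw [List.getD_append_right _ _ _ _ (by omega), hlen]
          simp
        have hown : ((lbPDS n hn).graph lbOwn).own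
            ((BaseP n m ++ [v]).getD (m+1) ((lbPDS n hn).graph lbOwn).vin) = 1 := by
          rw [hgd1]; rfl
        have hcv := hcons (m+1) hw hown
        rw [hgd2, hgd1] at hcv
        rw [lbSigma, if_pos ⟨rfl, by simp⟩] at hcv
        refine Or.inr (Or.inr (Or.inl ⟨m, ?_⟩))
        rw [hcv]
        rfl
      · -- Base2P: pop
        have hE := hedge _ (by rw [Base2P, List.getLast?_concat])
        have hv := step_cnt_rep n hE
        refine Or.inr (Or.inr (Or.inr (Or.inl ⟨m, 1, le_refl 1, by omega, ?_⟩)))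
        rw [PopsP_succ, PopsP, List.range_zero, List.map_nil, List.append_nil, hv]
        rfl
      · -- PopsP: pop or reach bottom
        obtain ⟨t, rfl⟩ : ∃ t, s = t + 1 := ⟨s - 1, by omega⟩
        have hlast : (PopsP n hn m (t+1)).getLast? =
            some (QLB.cnt (lbI n hn m) (lbJ n hn m (t+1)), List.replicate (m - t) ()) := by
          rw [PopsP_succ, List.getLast?_concat]
        rcases lt_or_eq_of_le hs2 with hlt | heq
        · -- t + 1 ≤ m : still popping
          obtain ⟨r, hr⟩ : ∃ r, m - t = r + 1 := ⟨m - t - 1, by omega⟩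
          have hE := hedge _ hlast
          rw [hr] at hE
          have hv := step_cnt_rep n hE
          have hr2 : r = m - (t+1) := by omega
          subst hr2
          rw [lbJ_succ n hn m (t+1)] at hv
          refine Or.inr (Or.inr (Or.inr (Or.inl ⟨m, t+1+1, by omega, by omega, ?_⟩)))
          rw [PopsP_succ n hn m (t+1), hv]
        · -- t + 1 = m + 1 : at the bottom
          have hE := hedge _ hlast
          have ht : t = m := by omega
          rw [ht, Nat.sub_self] at hE
          have hv := step_cnt_nil (hn := hn) hE
          refine Or.inr (Or.inr (Or.inr (Or.inr ⟨m, 1, le_refl 1, ?_⟩)))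
          rw [ht, BotsP, hv]
          rfl
      · -- BotsP: loop
        obtain ⟨t, rfl⟩ : ∃ t, s = t + 1 := ⟨s - 1, by omega⟩
        have hlast : (BotsP n hn m (t+1)).getLast? =
            some (QLB.cnt (lbI n hn m) (lbJ n hn m (m+1)), ([] : List Unit)) := by
          rw [BotsP_succ, List.getLast?_concat]
        have hv := step_cnt_nil (hn := hn) (hedge _ hlast)
        refine Or.inr (Or.inr (Or.inr (Or.inr ⟨m, t+2, by omega, ?_⟩)))
        rw [BotsP_succ n hn m (t+1), hv]

end ShapeLemma
section TWords

/-- Colors/heights of the pushing phase (length `m`). -/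
def T1 (m : ℕ) : List (ℕ × ℕ) := (List.range m).map fun t => ((1 : ℕ), t)

def T2 (m : ℕ) : List (ℕ × ℕ) := T1 (m+1) ++ [(1, m+1)]

def T3 (m : ℕ) : List (ℕ × ℕ) := T2 m ++ [(0, m+1)]

def T4 (m s : ℕ) (f : ℕ → ℕ) : List (ℕ × ℕ) :=
  T3 m ++ (List.range s).map fun t => (f (t+1), m - t)

def T5 (m s : ℕ) (f : ℕ → ℕ) (c0 : ℕ) : List (ℕ × ℕ) :=
  T4 m (m+1) f ++ List.replicate s (c0, 0)

theorem StairSc_nil (c : ℕ) : StairSc c [] = 0 := by rw [StairSc]; simp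

theorem bumpStart_singleton (v : ℕ × ℕ) : bumpStart [v] = 0 := by
  rw [bumpStart]
  simp

theorem StairSc_singleton (c : ℕ) (v : ℕ × ℕ) :
    StairSc c [v] = if c < v.1 then 0 else if v.1 = c then 1 else 0 := by
  rw [StairSc, dif_neg (by simp : ¬ ([v] : List (ℕ × ℕ)) = []), bumpStart_singleton]
  simp [minColList_singleton, StairSc_nil]

theorem length_T1 (m : ℕ) : (T1 m).length = m := by simp [T1]

theorem T1_getD (m l : ℕ) (h : l < m) : (T1 m).getD l (0,0) = (1, l) := by
  rw [List.getD_eq_getElem _ _ (by simp [length_T1, h])]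
  simp [T1]

theorem T1_succ (m : ℕ) : T1 (m+1) = T1 m ++ [(1, m)] := by
  rw [T1, T1, List.range_succ, List.map_append]
  rfl

theorem T1_score (c : ℕ) (m : ℕ) : StairSc c (T1 m) = if c = 1 then m else 0 := by
  induction m with
  | zero => simp [T1, StairSc_nil]
  | succ m ih =>
    rw [T1_succ]
    cases m with
    | zero =>
      simp only [T1, List.range_zero, List.map_nil, List.nil_append]
      rw [StairSc_singleton]
      rcases Nat.lt_trichotomy c 1 with h | h | h
      · have hc : c = 0 := by omega
        subst hc; norm_num
      · subst h; norm_num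
      · rw [if_neg (by simp; omega), if_neg (by simp; omega), if_neg (by omega)]
    | succ m =>
      have hb : bumpStart (T1 (m+1) ++ [((1:ℕ), m+1)]) = (T1 (m+1)).length := by
        apply bumpStart_concat_full _ _ (by simp [T1])
        intro l hl
        rw [length_T1] at hl
        rw [T1_getD _ _ hl]
        simp
        omega
      rw [StairSc_concat c _ _ hb (le_refl _), List.drop_length, List.take_length,
        List.nil_append, minColList_singleton]
      rcases Nat.lt_trichotomy c 1 with h | h | h
      · have hc : c = 0 := by omega
        subst hc
        rw [if_pos (by norm_num), ih]
        norm_num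
      · subst h
        rw [if_neg (by norm_num), if_pos (by norm_num), ih]
        norm_num
      · rw [if_neg (by simp; omega), if_neg (by simp; omega), if_neg (by omega)]
end TWords
section TWords2

theorem T2_eq (m : ℕ) : T2 m = T1 (m+2) := (T1_succ (m+1)).symm

theorem T2_score (c m : ℕ) : StairSc c (T2 m) = if c = 1 then m + 2 else 0 := by
  rw [T2_eq, T1_score]

theorem length_T2 (m : ℕ) : (T2 m).length = m + 2 := by simp [T2, length_T1]

theorem T2_getD (m l : ℕ) (h : l < m + 2) : ((T2 m).getD l (0,0)).2 = min l (m+1) := by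
  rw [T2_eq]
  rw [T1_getD _ _ (by omega)]
  simp
  try omega

theorem length_T3 (m : ℕ) : (T3 m).length = m + 3 := by simp [T3, length_T2]

theorem T3_getD (m l : ℕ) (h : l < m + 3) : ((T3 m).getD l (0,0)).2 = min l (m+1) := by
  rcases lt_or_ge l (m+2) with hl | hl
  · rw [T3, List.getD_append _ _ _ _ (by rw [length_T2]; omega)]
    exact T2_getD m l hl
  · rw [T3, List.getD_append_right _ _ _ _ (by rw [length_T2]; omega), length_T2]
    have : l - (m+2) = 0 := by omega
    rw [this]
    simp
    try omega

theorem StairSc_concat_top (c : ℕ) (X : List (ℕ × ℕ)) (v : ℕ × ℕ)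
    (hb : bumpStart (X ++ [v]) = X.length) :
    StairSc c (X ++ [v]) =
      if c < v.1 then StairSc c X else if v.1 = c then StairSc c X + 1 else 0 := by
  rw [StairSc_concat c X v hb (le_refl _), List.drop_length, List.take_length,
    List.nil_append, minColList_singleton]

theorem bumpStart_concat_last (X : List (ℕ × ℕ)) (v : ℕ × ℕ) (hX : X ≠ [])
    (H1 : (X.getD (X.length - 1) (0,0)).2 ≤ v.2) :
    bumpStart (X ++ [v]) = X.length := by
  have hpos : 0 < X.length := List.length_pos_iff.mpr hX
  rw [bumpStart_concat_split X v (X.length - 1) (by omega) H1 (by intro l h1 h2; omega)]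
  omega

theorem T3_score (c m : ℕ) : StairSc c (T3 m) = if c = 0 then 1 else 0 := by
  have hb : bumpStart (T2 m ++ [((0:ℕ), m+1)]) = (T2 m).length := by
    apply bumpStart_concat_full _ _ (by simp [T2])
    intro l hl
    rw [length_T2] at hl
    rw [T2_getD m l hl]
    simp
    try omega
  rw [T3, StairSc_concat_top c _ _ hb]
  by_cases hc : c = 0
  · subst hc
    rw [if_neg (by norm_num), if_pos (by norm_num), T2_score, if_pos rfl, if_neg (by norm_num)]
  · rw [if_neg (by simp), if_neg (by simp [Ne.symm hc]), if_neg hc]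

theorem length_T4 (m s : ℕ) (f : ℕ → ℕ) : (T4 m s f).length = m + 3 + s := by
  simp [T4, length_T3]

theorem T4_getD (m s : ℕ) (f : ℕ → ℕ) (l : ℕ) (h : l < m + 3 + s) :
    ((T4 m s f).getD l (0,0)).2 = if l < m + 3 then min l (m+1) else m - (l - (m+3)) := by
  rcases lt_or_ge l (m+3) with hl | hl
  · rw [T4, List.getD_append _ _ _ _ (by rw [length_T3]; omega), if_pos hl]
    exact T3_getD m l hl
  · rw [T4, List.getD_append_right _ _ _ _ (by rw [length_T3]; omega), length_T3, if_neg (by omega)]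
    rw [List.getD_eq_getElem _ _ (by simp; omega)]
    simp

theorem T4_eq_succ (m s : ℕ) (f : ℕ → ℕ) :
    T4 m (s+1) f = T4 m s f ++ [(f (s+1), m - s)] := by
  rw [T4, T4, List.range_succ, List.map_append, List.append_assoc]
  rfl

theorem T4_score0 (m s : ℕ) (f : ℕ → ℕ) (h1 : 1 ≤ s) (h2 : s ≤ m + 1) :
    StairSc 0 (T4 m s f) = 1 := by
  obtain ⟨t, rfl⟩ : ∃ t, s = t + 1 := ⟨s - 1, by omega⟩
  have ht : t ≤ m := by omega
  rw [T4_eq_succ]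
  have hb : bumpStart (T4 m t f ++ [(f (t+1), m - t)]) = (m - t) + 1 := by
    apply bumpStart_concat_split _ _ (m - t) (by rw [length_T4]; omega)
    · rw [T4_getD m t f _ (by omega), if_pos (by omega)]
      simp
      try omega
    · intro l hl hll
      rw [length_T4] at hll
      rw [T4_getD m t f _ (by omega)]
      split_ifs with hc
      · simp
        try omega
      · simp
        try omega
  rw [StairSc_concat 0 _ _ hb (by rw [length_T4]; omega)]
  have hmem : ((0:ℕ), m+1) ∈ (T4 m t f).drop (m - t + 1) ++ [(f (t+1), m - t)] := by
    apply List.mem_append_left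
    rw [T4, List.drop_append_of_le_length (by rw [length_T3]; omega),
      T3, List.drop_append_of_le_length (by rw [length_T2]; omega)]
    simp
  rw [minColList_eq_zero _ hmem rfl, if_neg (by omega), if_pos rfl]
  have htake : (T4 m t f).take (m - t + 1) = T1 (m - t + 1) := by
    rw [T4, List.take_append_of_le_length (by rw [length_T3]; omega),
      T3, List.take_append_of_le_length (by rw [length_T2]; omega),
      T2_eq, T1, ← List.map_take, List.take_range, min_eq_left (by omega)]
    rfl
  rw [htake, T1_score]
  norm_num

theorem length_T5 (m s : ℕ) (f : ℕ → ℕ) (c0 : ℕ) :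
    (T5 m s f c0).length = m + 3 + (m + 1) + s := by
  simp [T5, length_T4]

theorem T5_succ (m s : ℕ) (f : ℕ → ℕ) (c0 : ℕ) :
    T5 m (s+1) f c0 = T5 m s f c0 ++ [(c0, 0)] := by
  rw [T5, T5, List.replicate_succ', ← List.append_assoc]

theorem T5_score0 (m s : ℕ) (f : ℕ → ℕ) (h1 : 1 ≤ s) :
    StairSc 0 (T5 m s f 1) = 1 := by
  induction s with
  | zero => omega
  | succ s ih =>
    cases s with
    | zero =>
      have h5 : T5 m 1 f 1 = T4 m (m+1) f ++ [((1:ℕ), 0)] := by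
        rw [T5, List.replicate_one]
      rw [h5]
      have hb : bumpStart (T4 m (m+1) f ++ [((1:ℕ), 0)]) = (T4 m (m+1) f).length := by
        apply bumpStart_concat_last _ _ (by simp [T4, T3, T2])
        rw [length_T4]
        rw [T4_getD m (m+1) f _ (by omega), if_neg (by omega)]
        simp
        try omega
      rw [StairSc_concat_top 0 _ _ hb, if_pos (by norm_num)]
      exact T4_score0 m (m+1) f (by omega) (le_refl _)
    | succ s =>
      rw [T5_succ]
      have hb : bumpStart (T5 m (s+1) f 1 ++ [((1:ℕ), 0)]) = (T5 m (s+1) f 1).length := by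
        apply bumpStart_concat_last _ _ (by simp [T5, T4, T3, T2])
        rw [length_T5]
        rw [T5, List.getD_append_right _ _ _ _ (by rw [length_T4]; omega), length_T4]
        rw [List.getD_eq_getElem _ _ (by simp)]
        simp
      rw [StairSc_concat_top 0 _ _ hb, if_pos (by norm_num)]
      exact ih (by omega)

end TWords2
section ToCH

theorem toCH_dropLast {Q Γ : Type*} (col : Q → ℕ) (w : List (Config Q Γ)) :
    toCH col w.dropLast = (toCH col w).dropLast := by
  rw [toCH, toCH, List.map_dropLast]

variable (n : ℕ) (hn : 1 ≤ n)

theorem length_BaseP (m : ℕ) : (BaseP n m).length = m + 2 := by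
  simp [BaseP, length_Apath]

theorem length_BotsP (m s : ℕ) : (BotsP n hn m s).length = 2*m + 4 + s := by
  simp [BotsP, PopsP, Base2P, BaseP, Apath]
  try omega

theorem toCH_Apath (m : ℕ) : toCH lbCol (Apath n m) = T1 (m+1) := by
  rw [toCH, Apath, T1, List.map_map]
  apply List.map_congr_left
  intro t ht
  simp [lbCol]

theorem toCH_BaseP (m : ℕ) : toCH lbCol (BaseP n m) = T2 m := by
  rw [BaseP, T2, ← toCH_Apath n m]
  simp only [toCH, List.map_append, List.map_cons, List.map_nil]
  simp [lbCol]

theorem toCH_Base2P (m : ℕ) : toCH lbCol (Base2P n hn m) = T3 m := by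
  rw [Base2P, T3, ← toCH_BaseP n m]
  simp only [toCH, List.map_append, List.map_cons, List.map_nil]
  simp [lbCol]

/-- The color of the counting state after `j` pops. -/
noncomputable def fI (m : ℕ) : ℕ → ℕ :=
  fun j => if j % nthPrime ((lbI n hn m : Fin n) : ℕ) = 0 then 0 else 1

theorem toCH_PopsP (m s : ℕ) :
    toCH lbCol (PopsP n hn m s) = T4 m s (fI n hn m) := by
  rw [PopsP, T4, ← toCH_Base2P n hn m]
  simp only [toCH, List.map_append, List.map_map]
  congr 1
  apply List.map_congr_left
  intro t ht
  simp [lbCol, lbJ, fI, Function.comp]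
  rfl

theorem toCH_BotsP (m s : ℕ) :
    toCH lbCol (BotsP n hn m s) = T5 m s (fI n hn m) (fI n hn m (m+1)) := by
  rw [BotsP, T5, ← toCH_PopsP n hn m (m+1)]
  simp only [toCH, List.map_append, List.map_replicate]
  simp [lbCol, lbJ, fI]
  exact Or.inr rfl

end ToCH

section Main

variable (n : ℕ) (hn : 1 ≤ n)

theorem main_bound (k : ℕ) (hk : k ≤ ∏ i ∈ Finset.range n, nthPrime i)
    (w : List (Config (QLB n) Unit))
    (hpath : FinPath ((lbPDS n hn).graph lbOwn) w)
    (hcons : FinConsistent ((lbPDS n hn).graph lbOwn) 1 (lbSigma n hn) w)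
    (hdrop : MaxStairSc 1 (toCH lbCol w.dropLast) < k) :
    MaxStairSc 0 (toCH lbCol w) ≤ 1 := by
  apply MaxStairSc_le
  intro m
  have htake : (toCH lbCol w).take m = toCH lbCol (w.take m) := by
    rw [toCH, toCH, List.map_take]
  rw [htake]
  rcases eq_or_ne (w.take m) [] with he | hne
  · rw [he]
    simp [toCH, StairSc_nil]
  have hm1 : 1 ≤ m := by
    by_contra h
    have hm0 : m = 0 := by omega
    rw [hm0, List.take_zero] at hne
    exact hne rfl
  have hpath' := finPath_take hpath m hm1
  have hcons' := finConsistent_take hcons m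
  rcases shape_lemma n hn _ hne hpath' hcons' with ⟨m', heq⟩ | ⟨m', heq⟩ | ⟨m', heq⟩ |
    ⟨m', s, hs1, hs2, heq⟩ | ⟨m', s, hs1, heq⟩
  · rw [heq, toCH_Apath, T1_score]
    norm_num
  · rw [heq, toCH_BaseP, T2_score]
    norm_num
  · rw [heq, toCH_Base2P, T3_score]
    norm_num
  · rw [heq, toCH_PopsP, T4_score0 _ _ _ hs1 hs2]
  · -- Bots case : we must rule out the bad prime
    have hlen : (w.take m).length = 2*m' + 4 + s := by
      rw [heq, length_BotsP]
    have hmin : min m w.length = 2*m' + 4 + s := by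
      rw [← List.length_take, hlen]
    have hpre : w.take (m'+2) = BaseP n m' := by
      have h1 : w.take (m'+2) = (w.take m).take (m'+2) := by
        rw [List.take_take, min_eq_left (by omega)]
      rw [h1, heq, BotsP, PopsP, Base2P, List.append_assoc, List.append_assoc]
      exact List.take_left' (length_BaseP n m')
    have hsc : StairSc 1 ((toCH lbCol w.dropLast).take (m'+2)) = m' + 2 := by
      have e1 : (toCH lbCol w.dropLast).take (m'+2) = toCH lbCol (w.take (m'+2)) := by
        rw [toCH_dropLast, ← take_eq_take_dropLast _ _ (by rw [toCH, List.length_map]; omega)]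
        rw [toCH, toCH, List.map_take]
      rw [e1, hpre, toCH_BaseP, T2_score]
      norm_num
    have hlt : m' + 2 < k :=
      lt_of_le_of_lt (hsc ▸ le_MaxStairSc 1 (toCH lbCol w.dropLast) (m'+2)) hdrop
    have hI : ¬ nthPrime ((lbI n hn m' : Fin n) : ℕ) ∣ (m' + 1) := by
      rw [lbI_eq]
      exact goodI_spec n hn (m'+1) (by omega) (by omega)
    have hf : fI n hn m' (m'+1) = 1 := by
      rw [fI, if_neg]
      intro h0
      exact hI (Nat.dvd_iff_mod_eq_zero.mpr h0)
    rw [heq, toCH_BotsP, hf, T5_score0 _ _ _ hs1]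

end Main
/-- For every threshold `k` with `1 ≤ k ≤ k_n = p_1 ⬝ ... ⬝ p_n`, Player 1 wins
the finite-time pushdown game `(G_n, col_n, k)` of the lower-bound family. -/
theorem stmt17 (n : ℕ) (hn : 1 ≤ n) (k : ℕ) (hk1 : 1 ≤ k)
    (hk2 : k ≤ ∏ i ∈ Finset.range n, nthPrime i) :
    FTPDWins (lbPDS n hn) lbOwn lbCol 2 k 1 := by
  refine ⟨lbSigma n hn, lbSigma_strategy n hn, ?_⟩
  rintro w ⟨hpath, ⟨c, hc2, hck⟩, hdrop⟩ hcons
  refine ⟨1, one_lt_two, ?_, rfl⟩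
  rcases Nat.lt_or_ge k 2 with hklt | hkge
  · -- k = 1
    have hk1' : k = 1 := by omega
    subst hk1'
    obtain ⟨v0, t, rfl⟩ : ∃ v0 t, w = v0 :: t := by
      cases w with
      | nil => exact absurd hpath.1 (by simp)
      | cons a t => exact ⟨a, t, rfl⟩
    have hv0 : v0 = (QLB.qin, ([] : List Unit)) := by
      have h0 := hpath.1
      simp only [List.head?_cons, Option.some.injEq] at h0
      exact h0
    have hge : 1 ≤ MaxStairSc 1 (toCH lbCol (v0 :: t)) := by
      have h1 : (toCH lbCol (v0 :: t)).take 1 = [((1:ℕ), 0)] := by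
        subst hv0
        simp [toCH, lbCol]
      have h2 : StairSc 1 ((toCH lbCol (v0 :: t)).take 1) = 1 := by
        rw [h1, StairSc_singleton]
        norm_num
      calc 1 = StairSc 1 ((toCH lbCol (v0 :: t)).take 1) := h2.symm
        _ ≤ MaxStairSc 1 (toCH lbCol (v0 :: t)) := le_MaxStairSc _ _ _
    have hle : MaxStairSc 1 (toCH lbCol (v0 :: t)) ≤ 1 := by
      have h2 := MaxStairSc_le_dropLast_succ 1 (toCH lbCol (v0 :: t))
      have h3 := hdrop 1 one_lt_two
      rw [toCH_dropLast] at h3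
      omega
    omega
  · -- k ≥ 2 : the color-0 score never exceeds 1
    have hb := main_bound n hn k hk2 w hpath hcons (hdrop 1 one_lt_two)
    obtain rfl | rfl : c = 0 ∨ c = 1 := by omega
    · omega
    · exact hck

end FDGames
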